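/- Let μ = μ₁ ⊗ μ₂ and ν = ν₁ ⊗ ν₂ be product probability measures on ℝ^{d₁} × ℝ^{d₂} with finite first moments. Then the 1-Wasserstein distance (with respect to the ℓ¹-type cost given by summing the costs on each factor) decomposes as W₁(μ, ν) = W₁(μ₁, ν₁) + W₁(μ₂, ν₂). -/
import Mathlib

open MeasureTheory ENNReal

/-- The 1-Wasserstein (Kantorovich) transport cost: the infimum over couplings
`π` of `μ` and `ν` of the integral of the cost `c`. -/
noncomputable def wassersteinCost {X : Type*} [MeasurableSpace X]
    (c : X → X → ℝ≥0∞) (μ ν : Measure X) : ℝ≥0∞ :=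
  ⨅ π ∈ {π : Measure (X × X) |
      π.map Prod.fst = μ ∧ π.map Prod.snd = ν}, ∫⁻ p, c p.1 p.2 ∂π

lemma le_biInf_add_biInf {ι κ : Type*} {s : Set ι} {t : Set κ}
    {f : ι → ℝ≥0∞} {g : κ → ℝ≥0∞} {a : ℝ≥0∞}
    (h : ∀ i ∈ s, ∀ j ∈ t, a ≤ f i + g j) :
    a ≤ (⨅ i ∈ s, f i) + ⨅ j ∈ t, g j := by
  rw [iInf_subtype', iInf_subtype', ENNReal.iInf_add]
  refine le_iInf fun i => ?_
  rw [ENNReal.add_iInf]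
  exact le_iInf fun j => h i i.2 j j.2

section Aux

variable {X Y : Type*} [MeasurableSpace X] [MeasurableSpace Y]

lemma wasserstein_prod_aux
    [PseudoEMetricSpace X] [OpensMeasurableSpace X] [SecondCountableTopology X]
    [PseudoEMetricSpace Y] [OpensMeasurableSpace Y] [SecondCountableTopology Y]
    (μ₁ ν₁ : Measure X) (μ₂ ν₂ : Measure Y)
    [IsProbabilityMeasure μ₁] [IsProbabilityMeasure ν₁]
    [IsProbabilityMeasure μ₂] [IsProbabilityMeasure ν₂] :
    wassersteinCost
        (fun p q : X × Y => edist p.1 q.1 + edist p.2 q.2)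
        (μ₁.prod μ₂) (ν₁.prod ν₂) =
      wassersteinCost (fun x y => edist x y) μ₁ ν₁ +
        wassersteinCost (fun x y => edist x y) μ₂ ν₂ := by
  have hedX : Measurable fun p : X × X => edist p.1 p.2 := measurable_edist
  have hedY : Measurable fun p : Y × Y => edist p.1 p.2 := measurable_edist
  refine le_antisymm ?_ ?_
  · -- upper bound: for any couplings π₁, π₂, glue them
    have key : ∀ π₁ ∈ {π : Measure (X × X) |
          π.map Prod.fst = μ₁ ∧ π.map Prod.snd = ν₁},
        ∀ π₂ ∈ {π : Measure (Y × Y) |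
          π.map Prod.fst = μ₂ ∧ π.map Prod.snd = ν₂},
        wassersteinCost
            (fun p q : X × Y => edist p.1 q.1 + edist p.2 q.2)
            (μ₁.prod μ₂) (ν₁.prod ν₂) ≤
          (∫⁻ p, edist p.1 p.2 ∂π₁) + ∫⁻ p, edist p.1 p.2 ∂π₂ := by
      intro π₁ hπ₁ π₂ hπ₂
      obtain ⟨h₁f, h₁s⟩ := hπ₁
      obtain ⟨h₂f, h₂s⟩ := hπ₂
      haveI : IsProbabilityMeasure π₁ := by
        constructor
        have := congrArg (fun m : Measure X => m Set.univ) h₁f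
        simpa [Measure.map_apply measurable_fst MeasurableSet.univ] using this
      haveI : IsProbabilityMeasure π₂ := by
        constructor
        have := congrArg (fun m : Measure Y => m Set.univ) h₂f
        simpa [Measure.map_apply measurable_fst MeasurableSet.univ] using this
      set g : (X × X) × (Y × Y) → (X × Y) × (X × Y) :=
        fun r => ((r.1.1, r.2.1), (r.1.2, r.2.2)) with hg
      have hgm : Measurable g :=
        ((measurable_fst.comp measurable_fst).prodMk
            (measurable_fst.comp measurable_snd)).prodMk
          ((measurable_snd.comp measurable_fst).prodMk
            (measurable_snd.comp measurable_snd))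
      set π : Measure ((X × Y) × (X × Y)) := (π₁.prod π₂).map g with hπdef
      have hmem : π ∈ {π : Measure ((X × Y) × (X × Y)) |
          π.map Prod.fst = μ₁.prod μ₂ ∧ π.map Prod.snd = ν₁.prod ν₂} := by
        constructor
        · rw [hπdef, Measure.map_map measurable_fst hgm]
          have : (Prod.fst ∘ g) = Prod.map (Prod.fst : X × X → X)
              (Prod.fst : Y × Y → Y) := rfl
          rw [this, ← Measure.map_prod_map _ _ measurable_fst measurable_fst,
            h₁f, h₂f]
        · rw [hπdef, Measure.map_map measurable_snd hgm]
          have : (Prod.snd ∘ g) = Prod.map (Prod.snd : X × X → X)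
              (Prod.snd : Y × Y → Y) := rfl
          rw [this, ← Measure.map_prod_map _ _ measurable_snd measurable_snd,
            h₁s, h₂s]
      refine le_trans (iInf₂_le π hmem) ?_
      have hc : Measurable fun p : (X × Y) × (X × Y) =>
          edist p.1.1 p.2.1 + edist p.1.2 p.2.2 :=
        (hedX.comp ((measurable_fst.comp measurable_fst).prodMk
            (measurable_fst.comp measurable_snd))).add
          (hedY.comp ((measurable_snd.comp measurable_fst).prodMk
            (measurable_snd.comp measurable_snd)))
      have hcost : ∫⁻ p, edist p.1.1 p.2.1 + edist p.1.2 p.2.2 ∂π =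
          (∫⁻ p, edist p.1 p.2 ∂π₁) + ∫⁻ p, edist p.1 p.2 ∂π₂ := by
        rw [hπdef, lintegral_map hc hgm]
        have hA : Measurable fun r : (X × X) × (Y × Y) => edist r.1.1 r.1.2 :=
          hedX.comp measurable_fst
        have hstep : ∫⁻ r : (X × X) × (Y × Y),
            edist r.1.1 r.1.2 + edist r.2.1 r.2.2 ∂(π₁.prod π₂) =
            (∫⁻ r : (X × X) × (Y × Y), edist r.1.1 r.1.2 ∂(π₁.prod π₂)) +
            ∫⁻ r : (X × X) × (Y × Y), edist r.2.1 r.2.2 ∂(π₁.prod π₂) :=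
          lintegral_add_left hA _
        refine Eq.trans (by rfl) (Eq.trans hstep ?_)
        congr 1
        · rw [show (fun r : (X × X) × (Y × Y) => edist r.1.1 r.1.2) =
              fun r : (X × X) × (Y × Y) => edist r.1.1 r.1.2 from rfl,
            ← lintegral_map hedX measurable_fst, Measure.map_fst_prod]
          simp
        · rw [← lintegral_map hedY measurable_snd, Measure.map_snd_prod]
          simp
      exact le_of_eq hcost
    exact le_biInf_add_biInf key
  · -- lower bound: project any coupling of the products
    refine le_iInf₂ fun π hπ => ?_
    obtain ⟨hf, hs⟩ := hπ
    set f₁ : (X × Y) × (X × Y) → X × X := fun p => (p.1.1, p.2.1) with hf₁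
    set f₂ : (X × Y) × (X × Y) → Y × Y := fun p => (p.1.2, p.2.2) with hf₂
    have hf₁m : Measurable f₁ :=
      (measurable_fst.comp measurable_fst).prodMk
        (measurable_fst.comp measurable_snd)
    have hf₂m : Measurable f₂ :=
      (measurable_snd.comp measurable_fst).prodMk
        (measurable_snd.comp measurable_snd)
    have hmem₁ : π.map f₁ ∈ {ρ : Measure (X × X) |
        ρ.map Prod.fst = μ₁ ∧ ρ.map Prod.snd = ν₁} := by
      constructor
      · rw [Measure.map_map measurable_fst hf₁m,
          show (Prod.fst ∘ f₁) = (Prod.fst : X × Y → X) ∘ (Prod.fst) from rfl,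
          ← Measure.map_map measurable_fst measurable_fst, hf,
          Measure.map_fst_prod]
        simp
      · rw [Measure.map_map measurable_snd hf₁m,
          show (Prod.snd ∘ f₁) = (Prod.fst : X × Y → X) ∘ (Prod.snd) from rfl,
          ← Measure.map_map measurable_fst measurable_snd, hs,
          Measure.map_fst_prod]
        simp
    have hmem₂ : π.map f₂ ∈ {ρ : Measure (Y × Y) |
        ρ.map Prod.fst = μ₂ ∧ ρ.map Prod.snd = ν₂} := by
      constructor
      · rw [Measure.map_map measurable_fst hf₂m,
          show (Prod.fst ∘ f₂) = (Prod.snd : X × Y → Y) ∘ (Prod.fst) from rfl,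
          ← Measure.map_map measurable_snd measurable_fst, hf,
          Measure.map_snd_prod]
        simp
      · rw [Measure.map_map measurable_snd hf₂m,
          show (Prod.snd ∘ f₂) = (Prod.snd : X × Y → Y) ∘ (Prod.snd) from rfl,
          ← Measure.map_map measurable_snd measurable_snd, hs,
          Measure.map_snd_prod]
        simp
    have h1m : Measurable fun a : (X × Y) × (X × Y) =>
        edist (f₁ a).1 (f₁ a).2 := hedX.comp hf₁m
    have hcost : ∫⁻ p, edist p.1.1 p.2.1 + edist p.1.2 p.2.2 ∂π =
        (∫⁻ p, edist p.1 p.2 ∂(π.map f₁)) + ∫⁻ p, edist p.1 p.2 ∂(π.map f₂) := by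
      rw [lintegral_map hedX hf₁m, lintegral_map hedY hf₂m,
        ← lintegral_add_left h1m]
    calc wassersteinCost (fun x y => edist x y) μ₁ ν₁ +
          wassersteinCost (fun x y => edist x y) μ₂ ν₂ ≤
        (∫⁻ p, edist p.1 p.2 ∂(π.map f₁)) + ∫⁻ p, edist p.1 p.2 ∂(π.map f₂) :=
          add_le_add (iInf₂_le _ hmem₁) (iInf₂_le _ hmem₂)
      _ = ∫⁻ p, edist p.1.1 p.2.1 + edist p.1.2 p.2.2 ∂π := hcost.symm

end Aux

/-- For product measures `μ₁ ⊗ μ₂` and `ν₁ ⊗ ν₂` with finite first moments,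
the 1-Wasserstein distance with cost `c((x₁,x₂),(y₁,y₂)) = edist x₁ y₁ + edist x₂ y₂`
decomposes as the sum of the factor Wasserstein distances. -/
theorem wasserstein_product_decomposition (d₁ d₂ : ℕ)
    (μ₁ ν₁ : Measure (EuclideanSpace ℝ (Fin d₁)))
    (μ₂ ν₂ : Measure (EuclideanSpace ℝ (Fin d₂)))
    [IsProbabilityMeasure μ₁] [IsProbabilityMeasure ν₁]
    [IsProbabilityMeasure μ₂] [IsProbabilityMeasure ν₂]
    (hμ₁ : ∫⁻ x, ‖x‖₊ ∂μ₁ < ⊤) (hν₁ : ∫⁻ x, ‖x‖₊ ∂ν₁ < ⊤)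
    (hμ₂ : ∫⁻ x, ‖x‖₊ ∂μ₂ < ⊤) (hν₂ : ∫⁻ x, ‖x‖₊ ∂ν₂ < ⊤) :
    wassersteinCost
        (fun p q : EuclideanSpace ℝ (Fin d₁) × EuclideanSpace ℝ (Fin d₂) =>
          edist p.1 q.1 + edist p.2 q.2)
        (μ₁.prod μ₂) (ν₁.prod ν₂) =
      wassersteinCost (fun x y => edist x y) μ₁ ν₁ +
        wassersteinCost (fun x y => edist x y) μ₂ ν₂ :=
  wasserstein_prod_aux μ₁ ν₁ μ₂ ν₂
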